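/- Let Z be a nonnegative real-valued random variable with mean μ satisfying E[(Z − μ)²] ≤ B b² for some constants B, b > 0. Then for every 0 ≤ λ ≤ 1/b, E[exp(−λZ)] ≤ exp(−λμ) + B(λb)². -/

import Mathlib

open MeasureTheory Real

private lemma lemA' (t : ℝ) (ht : 0 ≤ t) : Real.exp (-t) ≤ 1 - t + t^2/2 := by
  have key : MonotoneOn (fun y : ℝ => 1 - y + y^2/2 - Real.exp (-y)) (Set.Ici 0) := by
    apply monotoneOn_of_deriv_nonneg (convex_Ici 0)
    · fun_prop
    · fun_prop
    · intro x hx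
      have hd : HasDerivAt (fun y : ℝ => 1 - y + y^2/2 - Real.exp (-y))
          (-1 + x - (-Real.exp (-x))) x := by
        have h1 : HasDerivAt (fun y : ℝ => Real.exp (-y)) (-Real.exp (-x)) x := by
          simpa [Function.comp_def] using (Real.hasDerivAt_exp (-x)).comp x ((hasDerivAt_id x).neg)
        have h2 : HasDerivAt (fun y : ℝ => 1 - y + y^2/2) (-1 + x) x := by
          have := ((hasDerivAt_pow 2 x).div_const 2)
          have h3 := ((hasDerivAt_const x (1:ℝ)).sub (hasDerivAt_id x)).add this
          simpa [Pi.add_def, Pi.sub_def, Pi.mul_def] using h3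
        exact h2.sub h1
      rw [hd.deriv]
      have := Real.add_one_le_exp (-x)
      linarith
  have h0 := key (Set.self_mem_Ici) (Set.mem_Ici.mpr ht) ht
  simp at h0
  linarith

private lemma lemB' (s : ℝ) (hs : 0 ≤ s) : 1 - s^2/2 ≤ Real.exp (-s) * (1 + s) := by
  have key : MonotoneOn (fun y : ℝ => Real.exp (-y) * (1 + y) - 1 + y^2/2) (Set.Ici 0) := by
    apply monotoneOn_of_deriv_nonneg (convex_Ici 0)
    · fun_prop
    · fun_prop
    · intro x hx
      have h1 : HasDerivAt (fun y : ℝ => Real.exp (-y)) (-Real.exp (-x)) x := by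
        simpa [Function.comp_def] using (Real.hasDerivAt_exp (-x)).comp x ((hasDerivAt_id x).neg)
      have hd : HasDerivAt (fun y : ℝ => Real.exp (-y) * (1 + y) - 1 + y^2/2)
          ((-Real.exp (-x)) * (1 + x) + Real.exp (-x) * 1 - 0 + x) x := by
        have h2 := (h1.mul ((hasDerivAt_const x (1:ℝ)).add (hasDerivAt_id x)))
        have h3 := (h2.sub (hasDerivAt_const x (1:ℝ))).add ((hasDerivAt_pow 2 x).div_const 2)
        simpa [Pi.add_def, Pi.sub_def, Pi.mul_def] using h3
      rw [hd.deriv]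
      have hx0 : (0:ℝ) ≤ x := le_of_lt (by simpa using hx)
      have he : Real.exp (-x) ≤ 1 := Real.exp_le_one_iff.mpr (by linarith)
      have hp : 0 ≤ x * (1 - Real.exp (-x)) := by
        apply mul_nonneg hx0; linarith
      nlinarith [Real.exp_pos (-x)]
  have h0 := key (Set.self_mem_Ici) (Set.mem_Ici.mpr hs) hs
  simp at h0
  linarith

private lemma lemC' (c u : ℝ) (hc : 0 ≤ c) (hu : -c ≤ u) :
    Real.exp (-(c+u)) ≤ Real.exp (-c) * (1 - u) + u^2/2 := by
  have hec : Real.exp (-c) ≤ 1 := Real.exp_le_one_iff.mpr (by linarith)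
  rcases le_or_gt 0 u with h | h
  · have hA := lemA' u h
    have : Real.exp (-(c+u)) = Real.exp (-c) * Real.exp (-u) := by
      rw [← Real.exp_add]; ring_nf
    rw [this]
    have h1 : Real.exp (-c) * Real.exp (-u) ≤ Real.exp (-c) * (1 - u + u^2/2) := by
      apply mul_le_mul_of_nonneg_left hA (Real.exp_pos _).le
    nlinarith [Real.exp_pos (-c)]
  · obtain ⟨s, hsdef⟩ : ∃ s, s = -u := ⟨-u, rfl⟩
    have hs0 : 0 < s := by simp [hsdef]; linarith
    have hsc : s ≤ c := by simp [hsdef]; linarith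
    have hB := lemB' s hs0.le
    have heq : Real.exp (-(c+u)) = Real.exp (-c) * Real.exp s := by
      rw [← Real.exp_add]; congr 1; rw [hsdef]; ring
    rw [heq]
    have hmono : Real.exp (-c) ≤ Real.exp (-s) := Real.exp_le_exp.mpr (by linarith)
    have hnn : 0 ≤ Real.exp s - 1 - s := by
      have := Real.add_one_le_exp s; linarith
    have h1 : Real.exp (-c) * (Real.exp s - 1 - s) ≤ Real.exp (-s) * (Real.exp s - 1 - s) :=
      mul_le_mul_of_nonneg_right hmono hnn
    have h2 : Real.exp (-s) * (Real.exp s - 1 - s) = 1 - Real.exp (-s) * (1 + s) := by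
      have : Real.exp (-s) * Real.exp s = 1 := by rw [← Real.exp_add]; simp
      nlinarith [this]
    have h3 : Real.exp (-c) * (Real.exp s - 1 - s) ≤ s^2/2 := by
      rw [h2] at h1; linarith
    have hu2 : u^2 = s^2 := by simp [hsdef]
    nlinarith [Real.exp_pos (-c)]

/-- Let `Z` be a nonnegative real-valued random variable with mean `μ`
satisfying `E[(Z − μ)²] ≤ B b²` for constants `B, b > 0`.  Then for every
`0 ≤ λ ≤ 1/b`, `E[exp(−λ Z)] ≤ exp(−λ μ) + B (λ b)²`. -/
theorem stmt3
    {Ω : Type*} [MeasurableSpace Ω] (ℙ : Measure Ω) [IsProbabilityMeasure ℙ]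
    (Z : Ω → ℝ) (hZmeas : Measurable Z) (hZnonneg : ∀ᵐ ω ∂ℙ, 0 ≤ Z ω)
    (hZint : Integrable Z ℙ)
    (μ : ℝ) (hμ : μ = ∫ ω, Z ω ∂ℙ)
    (hZsq : Integrable (fun ω => (Z ω - μ) ^ 2) ℙ)
    (B b : ℝ) (hB : 0 < B) (hb : 0 < b)
    (hvar : ∫ ω, (Z ω - μ) ^ 2 ∂ℙ ≤ B * b ^ 2)
    (lam : ℝ) (hlam0 : 0 ≤ lam) (hlam1 : lam ≤ 1 / b) :
    ∫ ω, Real.exp (-lam * Z ω) ∂ℙ ≤ Real.exp (-lam * μ) + B * (lam * b) ^ 2 := by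
  have hμ0 : 0 ≤ μ := by
    rw [hμ]; exact integral_nonneg_of_ae hZnonneg
  set C1 : ℝ := Real.exp (-lam * μ) with hC1
  set C2 : ℝ := -lam * Real.exp (-lam * μ) with hC2
  set C3 : ℝ := lam^2/2 with hC3
  -- pointwise bound
  have hpt : ∀ᵐ ω ∂ℙ, Real.exp (-lam * Z ω)
      ≤ C1 + C2 * (Z ω - μ) + C3 * (Z ω - μ)^2 := by
    filter_upwards [hZnonneg] with ω hω
    have hc : 0 ≤ lam * μ := mul_nonneg hlam0 hμ0
    have hu : -(lam * μ) ≤ lam * (Z ω - μ) := by nlinarith [mul_nonneg hlam0 hω]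
    have := lemC' (lam * μ) (lam * (Z ω - μ)) hc hu
    have heq : -(lam * μ + lam * (Z ω - μ)) = -lam * Z ω := by ring
    rw [heq] at this
    calc Real.exp (-lam * Z ω)
        ≤ Real.exp (-(lam * μ)) * (1 - lam * (Z ω - μ)) + (lam * (Z ω - μ))^2/2 := this
      _ = C1 + C2 * (Z ω - μ) + C3 * (Z ω - μ)^2 := by
          rw [hC1, hC2, hC3, neg_mul]; ring
  -- integrability
  have hint1 : Integrable (fun ω => Real.exp (-lam * Z ω)) ℙ := by
    apply Integrable.mono' (integrable_const (1:ℝ))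
    · exact ((hZmeas.const_mul (-lam)).exp).aestronglyMeasurable
    · filter_upwards [hZnonneg] with ω hω
      rw [Real.norm_eq_abs, abs_of_pos (Real.exp_pos _)]
      exact Real.exp_le_one_iff.mpr (by nlinarith [mul_nonneg hlam0 hω])
  have hintZ : Integrable (fun ω => Z ω - μ) ℙ := hZint.sub (integrable_const μ)
  have hint2 : Integrable (fun ω => C1 + C2 * (Z ω - μ) + C3 * (Z ω - μ)^2) ℙ :=
    ((integrable_const C1).add (hintZ.const_mul C2)).add (hZsq.const_mul C3)
  have hmono := integral_mono_ae hint1 hint2 hpt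
  -- compute the RHS integral
  have hZc : ∫ ω, (Z ω - μ) ∂ℙ = 0 := by
    rw [integral_sub hZint (integrable_const μ), integral_const]
    simp [hμ]
  have hRHS : ∫ ω, (C1 + C2 * (Z ω - μ) + C3 * (Z ω - μ)^2) ∂ℙ
      = C1 + C3 * ∫ ω, (Z ω - μ)^2 ∂ℙ := by
    have h12 : Integrable (fun ω => C1 + C2 * (Z ω - μ)) ℙ :=
      (integrable_const C1).add (hintZ.const_mul C2)
    have h3 : Integrable (fun ω => C3 * (Z ω - μ)^2) ℙ := hZsq.const_mul C3
    rw [integral_add h12 h3,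
        integral_add (integrable_const C1) (hintZ.const_mul C2),
        integral_const, integral_const_mul, integral_const_mul, hZc]
    simp
  rw [hRHS] at hmono
  have hV0 : 0 ≤ ∫ ω, (Z ω - μ)^2 ∂ℙ :=
    integral_nonneg (fun ω => sq_nonneg _)
  have hfinal : C3 * ∫ ω, (Z ω - μ)^2 ∂ℙ ≤ B * (lam * b)^2 := by
    rw [hC3]
    nlinarith [sq_nonneg lam, mul_nonneg (sq_nonneg lam) hV0]
  calc ∫ ω, Real.exp (-lam * Z ω) ∂ℙ ≤ C1 + C3 * ∫ ω, (Z ω - μ)^2 ∂ℙ := hmono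
    _ ≤ Real.exp (-lam * μ) + B * (lam * b)^2 := by rw [hC1]; linarith
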